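/- Let V > 0 and let μ be a measure on [0, π/2] × [0, ∞) (coordinates (α, ℓ)) such that the pushforward of μ under the projection (α, ℓ) ↦ α equals twice the Lebesgue measure on [0, π/2], and such that ∫ ℓ²/2 dμ(α, ℓ) ≤ V. Then ∫ ℓ·cos(α) dμ(α, ℓ) ≤ √(πV). -/

import Mathlib

open Real MeasureTheory ENNReal

/-- Analytic core of the Little Prince theorem: if `μ` is a measure on
`[0, π/2] × [0, ∞)` (coordinates `(α, ℓ)`) whose `α`-marginal is twice Lebesgue
measure on `[0, π/2]` and with `∫ ℓ²/2 dμ ≤ V`, then `∫ ℓ·cos α dμ ≤ √(πV)`. -/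
theorem littlePrince_core (V : ℝ) (hV : 0 < V) (μ : Measure (ℝ × ℝ))
    (hsupp : μ ((Set.Icc 0 (π / 2) ×ˢ Set.Ici (0 : ℝ))ᶜ) = 0)
    (hmarg : μ.map Prod.fst = (2 : ℝ≥0∞) • volume.restrict (Set.Icc 0 (π / 2)))
    (harea : ∫⁻ x, ENNReal.ofReal (x.2 ^ 2 / 2) ∂μ ≤ ENNReal.ofReal V) :
    ∫⁻ x, ENNReal.ofReal (x.2 * cos x.1) ∂μ ≤ ENNReal.ofReal (Real.sqrt (π * V)) := by
  have hπ : (0:ℝ) < π := Real.pi_pos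
  set r : ℝ := 2 * Real.sqrt (V / π) with hrdef
  have hsq : Real.sqrt (V / π) > 0 := Real.sqrt_pos.mpr (by positivity)
  have hr : 0 < r := by positivity
  have hVV : Real.sqrt V * Real.sqrt V = V := Real.mul_self_sqrt hV.le
  have hππ : Real.sqrt π * Real.sqrt π = π := Real.mul_self_sqrt hπ.le
  have hsπ : 0 < Real.sqrt π := Real.sqrt_pos.mpr hπ
  have hsV : 0 < Real.sqrt V := Real.sqrt_pos.mpr hV
  have hdiv : Real.sqrt (V / π) = Real.sqrt V / Real.sqrt π := Real.sqrt_div hV.le π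
  have hmul : Real.sqrt (π * V) = Real.sqrt π * Real.sqrt V := Real.sqrt_mul hπ.le V
  have e1 : V * (1 / r) = Real.sqrt (π * V) / 2 := by
    rw [hrdef, hdiv, hmul]; field_simp; nlinarith
  have e2 : r * (π / 4) = Real.sqrt (π * V) / 2 := by
    rw [hrdef, hdiv, hmul]; field_simp; nlinarith
  -- pointwise AM-GM
  have hpt : ∀ x : ℝ × ℝ, ENNReal.ofReal (x.2 * cos x.1) ≤
      ENNReal.ofReal (x.2 ^ 2 / 2 * (1 / r)) + ENNReal.ofReal (r / 2 * cos x.1 ^ 2) := by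
    intro x
    refine le_trans (ENNReal.ofReal_le_ofReal ?_) ENNReal.ofReal_add_le
    nlinarith [div_nonneg (sq_nonneg (x.2 - r * cos x.1)) (by positivity : (0:ℝ) ≤ 2 * r),
      sq_nonneg (x.2 - r * cos x.1),
      (by field_simp; ring : x.2 ^ 2 / 2 * (1 / r) + r / 2 * cos x.1 ^ 2 - x.2 * cos x.1
        = (x.2 - r * cos x.1) ^ 2 / (2 * r))]
  have m0 : Measurable fun x : ℝ × ℝ => x.2 ^ 2 / 2 * (1 / r) :=
    ((measurable_snd.pow_const 2).div_const 2).mul_const _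
  have meas1 : Measurable fun x : ℝ × ℝ => ENNReal.ofReal (x.2 ^ 2 / 2 * (1 / r)) :=
    m0.ennreal_ofReal
  -- term 1 bound
  have t1 : ∫⁻ x, ENNReal.ofReal (x.2 ^ 2 / 2 * (1 / r)) ∂μ
      ≤ ENNReal.ofReal (Real.sqrt (π * V) / 2) := by
    have : ∀ x : ℝ × ℝ, ENNReal.ofReal (x.2 ^ 2 / 2 * (1 / r))
        = ENNReal.ofReal (x.2 ^ 2 / 2) * ENNReal.ofReal (1 / r) := fun x =>
      ENNReal.ofReal_mul (by positivity)
    simp only [this]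
    rw [lintegral_mul_const _ ((measurable_snd.pow_const 2).div_const 2).ennreal_ofReal]
    calc (∫⁻ x, ENNReal.ofReal (x.2 ^ 2 / 2) ∂μ) * ENNReal.ofReal (1 / r)
        ≤ ENNReal.ofReal V * ENNReal.ofReal (1 / r) :=
          mul_le_mul_left harea _
      _ = ENNReal.ofReal (V * (1 / r)) := (ENNReal.ofReal_mul hV.le).symm
      _ = ENNReal.ofReal (Real.sqrt (π * V) / 2) := by rw [e1]
  -- term 2 computation
  have t2 : ∫⁻ x, ENNReal.ofReal (r / 2 * cos x.1 ^ 2) ∂μ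
      = ENNReal.ofReal (Real.sqrt (π * V) / 2) := by
    have hg : Measurable fun a : ℝ => ENNReal.ofReal (r / 2 * cos a ^ 2) :=
      (measurable_const.mul (Real.continuous_cos.measurable.pow_const 2)).ennreal_ofReal
    rw [← lintegral_map (μ := μ) hg measurable_fst, hmarg, lintegral_smul_measure]
    have hint : IntegrableOn (fun a : ℝ => r / 2 * cos a ^ 2) (Set.Icc 0 (π / 2)) := by
      apply Continuous.integrableOn_Icc; continuity
    rw [← ofReal_integral_eq_lintegral_ofReal hint
      (Filter.Eventually.of_forall fun a => by positivity)]
    have hint2 : ∫ a in Set.Icc 0 (π / 2), r / 2 * cos a ^ 2 = Real.sqrt (π * V) / 4 := by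
      rw [MeasureTheory.integral_Icc_eq_integral_Ioc,
        ← intervalIntegral.integral_of_le (by positivity : (0:ℝ) ≤ π / 2),
        intervalIntegral.integral_const_mul, integral_cos_sq]
      simp only [Real.sin_pi_div_two, Real.cos_pi_div_two, Real.sin_zero, Real.cos_zero]
      nlinarith [e2]
    rw [hint2, show (2:ℝ≥0∞) = ENNReal.ofReal 2 by simp, smul_eq_mul,
      ← ENNReal.ofReal_mul (by norm_num)]
    congr 1
    ring
  calc ∫⁻ x, ENNReal.ofReal (x.2 * cos x.1) ∂μ
      ≤ ∫⁻ x, (ENNReal.ofReal (x.2 ^ 2 / 2 * (1 / r))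
          + ENNReal.ofReal (r / 2 * cos x.1 ^ 2)) ∂μ := lintegral_mono hpt
    _ = (∫⁻ x, ENNReal.ofReal (x.2 ^ 2 / 2 * (1 / r)) ∂μ)
          + ∫⁻ x, ENNReal.ofReal (r / 2 * cos x.1 ^ 2) ∂μ := lintegral_add_left meas1 _
    _ ≤ ENNReal.ofReal (Real.sqrt (π * V) / 2) + ENNReal.ofReal (Real.sqrt (π * V) / 2) := by
        exact add_le_add t1 t2.le
    _ = ENNReal.ofReal (Real.sqrt (π * V)) := by
        rw [← ENNReal.ofReal_add (by positivity) (by positivity)]; norm_num
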